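/- A word w ∈ {c,d}* containing at least one c is irreducible with respect to R_N = {cd²c → cdc, cd⁴ → cdc, cd³c² → cdc, cd³cdc → cdc} if and only if w has the form d^p v, or d^p v (d³c)^q d^r, where p ≥ 0, v ∈ U_N, q ≥ 0, 0 ≤ r ≤ 3 and q + r > 0, with U_N = {c^{i₀} d c^{i₁} d ⋯ d c^{i_k} : k ≥ 0, i₀,…,i_k ≥ 1}. -/
import Mathlib


open Relation

/-- Alphabet for the monoid `M`. -/
inductive AB : Type | a | b

/-- Alphabet for the monoid `N`. -/
inductive CD : Type | c | d

abbrev WM := FreeMonoid AB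
abbrev WN := FreeMonoid CD

def a : WM := FreeMonoid.of AB.a
def b : WM := FreeMonoid.of AB.b
def c : WN := FreeMonoid.of CD.c
def d : WN := FreeMonoid.of CD.d

/-- The defining relation set of `M`: `a b^n a = a b a` for `n ≥ 2`. -/
def rM : WM → WM → Prop := fun x y => ∃ n, 2 ≤ n ∧ x = a * b ^ n * a ∧ y = a * b * a

/-- The defining relation set of `N`. -/
def rN : WN → WN → Prop := fun x y =>
  (x = c * d ^ 2 * c ∨ x = c * d ^ 4 ∨ x = c * d ^ 3 * c ^ 2 ∨ x = c * d ^ 3 * (c * d * c)) ∧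
    y = c * d * c

/-- Single-step rewriting relation of a rewriting system `R`. -/
def Step {α : Type} (R : FreeMonoid α → FreeMonoid α → Prop) (x y : FreeMonoid α) : Prop :=
  ∃ u v p q, R u v ∧ x = p * u * q ∧ y = p * v * q

/-- A word is irreducible if no single-step rewrite applies to it. -/
def Irred {α : Type} (R : FreeMonoid α → FreeMonoid α → Prop) (w : FreeMonoid α) : Prop :=
  ∀ v, ¬ Step R w v

/-- Words `a^{i₀} b a^{i₁} b ⋯ b a^{i_k}` with `k ≥ 0`, all `i_j ≥ 1`. -/
def UM : Set WM :=
  {w | ∃ l : List ℕ, l ≠ [] ∧ (∀ i ∈ l, 1 ≤ i) ∧ w = ((l.map (a ^ ·)).intersperse b).prod}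

/-- Words `c^{i₀} d c^{i₁} d ⋯ d c^{i_k}` with `k ≥ 0`, all `i_j ≥ 1`. -/
def UN : Set WN :=
  {w | ∃ l : List ℕ, l ≠ [] ∧ (∀ i ∈ l, 1 ≤ i) ∧ w = ((l.map (c ^ ·)).intersperse d).prod}

/-- Normal forms for `M`. -/
def NM : Set WM :=
  {w | (∃ s : ℕ, w = b ^ s) ∨ (∃ s : ℕ, ∃ u ∈ UM, w = b ^ s * u) ∨
    (∃ s t : ℕ, ∃ u ∈ UM, 0 < t ∧ w = b ^ s * u * b ^ t)}

/-- Normal forms for `N`. -/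
def NN : Set WN :=
  {w | (∃ p : ℕ, w = d ^ p) ∨ (∃ p : ℕ, ∃ v ∈ UN, w = d ^ p * v) ∨
    (∃ p q r : ℕ, ∃ v ∈ UN, r ≤ 3 ∧ 0 < q + r ∧ w = d ^ p * v * (d ^ 3 * c) ^ q * d ^ r)}

/-- The substitution `a ↦ c`, `b ↦ d`. -/
def bar : WM →* WN := FreeMonoid.map fun x => match x with | AB.a => CD.c | AB.b => CD.d

/-! ### Auxiliary development -/

deriving instance DecidableEq for CD

namespace Stmt7Aux

/-- States of the scanning automaton. -/
inductive St : Type | S0 | A | B | C | D | E | F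
deriving DecidableEq

/-- Transition function. -/
def δ : St → CD → Option St
  | .S0, .c => some .A
  | .S0, .d => some .S0
  | .A, .c => some .A
  | .A, .d => some .B
  | .B, .c => some .A
  | .B, .d => some .C
  | .C, .c => none
  | .C, .d => some .D
  | .D, .c => some .E
  | .D, .d => none
  | .E, .c => none
  | .E, .d => some .F
  | .F, .c => none
  | .F, .d => some .C

def scan : St → List CD → Bool
  | _, [] => true
  | s, x :: t =>
    match δ s x with
    | none => false
    | some s' => scan s' t

def rep : St → List CD
  | .S0 => []
  | .A => [.c]
  | .B => [.c, .d]
  | .C => [.c, .d, .d]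
  | .D => [.c, .d, .d, .d]
  | .E => [.c, .d, .d, .d, .c]
  | .F => [.c, .d, .d, .d, .c, .d]

def pats : List (List CD) :=
  [[.c, .d, .d, .c], [.c, .d, .d, .d, .d], [.c, .d, .d, .d, .c, .c],
    [.c, .d, .d, .d, .c, .d, .c]]

def Bad (t : List CD) : Prop := ∃ u ∈ pats, u <:+: t

lemma bad_cons_iff (x : CD) (t : List CD) :
    Bad (x :: t) ↔ (∃ u ∈ pats, u <+: x :: t) ∨ Bad t := by
  constructor
  · rintro ⟨u, hu, h⟩
    rcases List.infix_cons_iff.1 h with h | h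
    exacts [Or.inl ⟨u, hu, h⟩, Or.inr ⟨u, hu, h⟩]
  · rintro (⟨u, hu, h⟩ | ⟨u, hu, h⟩)
    exacts [⟨u, hu, List.infix_cons_iff.2 (Or.inl h)⟩,
      ⟨u, hu, List.infix_cons_iff.2 (Or.inr h)⟩]

lemma bad_d (t : List CD) : Bad (CD.d :: t) ↔ Bad t := by
  rw [bad_cons_iff]
  simp [pats, List.cons_prefix_cons]

lemma bad_cc (t : List CD) : Bad (CD.c :: CD.c :: t) ↔ Bad (CD.c :: t) := by
  rw [bad_cons_iff]
  simp [pats, List.cons_prefix_cons]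

lemma bad_cdc (t : List CD) : Bad (CD.c :: CD.d :: CD.c :: t) ↔ Bad (CD.c :: t) := by
  rw [bad_cons_iff, bad_d]
  simp [pats, List.cons_prefix_cons]

lemma bad_F (t : List CD) :
    Bad (CD.c :: CD.d :: CD.d :: CD.d :: CD.c :: CD.d :: CD.d :: t) ↔
      Bad (CD.c :: CD.d :: CD.d :: t) := by
  rw [bad_cons_iff, bad_d, bad_d, bad_d]
  simp [pats, List.cons_prefix_cons]

lemma scan_iff_not_bad : ∀ (t : List CD) (s : St), scan s t = true ↔ ¬ Bad (rep s ++ t) := by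
  intro t
  induction t with
  | nil =>
    intro s
    cases s <;>
      exact iff_of_true rfl (fun hb => by revert hb; unfold Bad; decide)
  | cons x t ih =>
    intro s
    cases s <;> cases x <;>
      simp only [scan, δ, rep, List.cons_append, List.nil_append]
    · rw [ih .A]; rfl
    · rw [ih .S0]
      show ¬Bad t ↔ ¬Bad (CD.d :: t)
      exact not_congr (bad_d t).symm
    · rw [ih .A]
      show ¬Bad (CD.c :: t) ↔ ¬Bad (CD.c :: CD.c :: t)
      exact not_congr (bad_cc t).symm
    · rw [ih .B]; rfl
    · rw [ih .A]
      show ¬Bad (CD.c :: t) ↔ ¬Bad (CD.c :: CD.d :: CD.c :: t)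
      exact not_congr (bad_cdc t).symm
    · rw [ih .C]; rfl
    · exact iff_of_false (by simp) (not_not_intro
        ⟨[CD.c, CD.d, CD.d, CD.c], by simp [pats], ⟨[], t, rfl⟩⟩)
    · rw [ih .D]; rfl
    · rw [ih .E]; rfl
    · exact iff_of_false (by simp) (not_not_intro
        ⟨[CD.c, CD.d, CD.d, CD.d, CD.d], by simp [pats], ⟨[], t, rfl⟩⟩)
    · exact iff_of_false (by simp) (not_not_intro
        ⟨[CD.c, CD.d, CD.d, CD.d, CD.c, CD.c], by simp [pats], ⟨[], t, rfl⟩⟩)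
    · rw [ih .F]; rfl
    · exact iff_of_false (by simp) (not_not_intro
        ⟨[CD.c, CD.d, CD.d, CD.d, CD.c, CD.d, CD.c], by simp [pats], ⟨[], t, rfl⟩⟩)
    · rw [ih .C]
      show ¬Bad (CD.c :: CD.d :: CD.d :: t) ↔ _
      exact not_congr (bad_F t).symm

lemma irred_iff_not_bad (w : WN) : Irred rN w ↔ ¬ Bad (FreeMonoid.toList w) := by
  constructor
  · intro h hbad
    obtain ⟨u, hu, s, t, hst⟩ := hbad
    refine h (FreeMonoid.ofList s * (c * d * c) * FreeMonoid.ofList t)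
      ⟨FreeMonoid.ofList u, c * d * c, FreeMonoid.ofList s, FreeMonoid.ofList t,
        ⟨?_, rfl⟩, ?_, rfl⟩
    · simp only [pats, List.mem_cons, List.not_mem_nil, or_false] at hu
      rcases hu with h' | h' | h' | h' <;> subst h'
      · exact Or.inl rfl
      · exact Or.inr (Or.inl rfl)
      · exact Or.inr (Or.inr (Or.inl rfl))
      · exact Or.inr (Or.inr (Or.inr rfl))
    · apply FreeMonoid.toList.injective
      simp only [FreeMonoid.toList_mul, FreeMonoid.toList_ofList]
      exact hst.symm
  · intro h y hy
    obtain ⟨u, v, p, q, ⟨hu, -⟩, hw, -⟩ := hy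
    apply h
    refine ⟨FreeMonoid.toList u, ?_, FreeMonoid.toList p, FreeMonoid.toList q, ?_⟩
    · rcases hu with h' | h' | h' | h' <;> subst h'
      · show [CD.c, CD.d, CD.d, CD.c] ∈ pats; simp [pats]
      · show [CD.c, CD.d, CD.d, CD.d, CD.d] ∈ pats; simp [pats]
      · show [CD.c, CD.d, CD.d, CD.d, CD.c, CD.c] ∈ pats; simp [pats]
      · show [CD.c, CD.d, CD.d, CD.d, CD.c, CD.d, CD.c] ∈ pats; simp [pats]
    · rw [hw]; rfl

/-! ### Scanning normal forms -/

lemma scan_S0_dpow (p : ℕ) (rest : List CD) :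
    scan .S0 (FreeMonoid.toList (d ^ p) ++ rest) = scan .S0 rest := by
  induction p with
  | zero => rfl
  | succ p ih =>
    rw [pow_succ', FreeMonoid.toList_mul, List.append_assoc]
    exact ih

lemma scan_A_cpow (j : ℕ) (rest : List CD) :
    scan .A (FreeMonoid.toList (c ^ j) ++ rest) = scan .A rest := by
  induction j with
  | zero => rfl
  | succ j ih =>
    rw [pow_succ', FreeMonoid.toList_mul, List.append_assoc]
    exact ih

lemma scan_c {s : St} (hs : δ s CD.c = some .A) (L : List CD) :
    scan s (CD.c :: L) = scan .A L := by
  simp [scan, hs]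

lemma scan_v : ∀ (l : List ℕ), l ≠ [] → (∀ i ∈ l, 1 ≤ i) → ∀ (s : St), δ s CD.c = some .A →
    ∀ rest, scan s (FreeMonoid.toList ((l.map (c ^ ·)).intersperse d).prod ++ rest) =
      scan .A rest := by
  intro l
  induction l with
  | nil => intro h; exact absurd rfl h
  | cons i l ih =>
    intro _ hall s hs rest
    obtain ⟨j, rfl⟩ : ∃ j, i = j + 1 := by
      have := hall i (by simp)
      exact ⟨i - 1, by omega⟩
    cases l with
    | nil =>
      have e1 : FreeMonoid.toList ((([j+1].map (c ^ ·)).intersperse d).prod) ++ rest =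
          CD.c :: (FreeMonoid.toList (c ^ j) ++ rest) := by
        simp only [List.map_cons, List.map_nil, List.intersperse_single, List.prod_cons,
          List.prod_nil, mul_one]
        rw [pow_succ', FreeMonoid.toList_mul, List.append_assoc]
        rfl
      rw [e1, scan_c hs, scan_A_cpow]
    | cons i' l' =>
      have e2 : FreeMonoid.toList (((((j+1) :: i' :: l').map (c ^ ·)).intersperse d).prod)
            ++ rest =
          CD.c :: (FreeMonoid.toList (c ^ j) ++ (CD.d ::
            (FreeMonoid.toList (((i' :: l').map (c ^ ·)).intersperse d).prod ++ rest))) := by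
        simp only [List.map_cons]
        rw [List.intersperse_cons_cons, List.prod_cons, List.prod_cons,
          ← mul_assoc, FreeMonoid.toList_mul, FreeMonoid.toList_mul, pow_succ',
          FreeMonoid.toList_mul]
        simp only [List.append_assoc, List.map_cons]
        rfl
      rw [e2, scan_c hs, scan_A_cpow]
      rw [show ∀ L, scan St.A (CD.d :: L) = scan .B L from fun _ => rfl]
      exact ih (by simp) (fun i hi => hall i (by simp [hi])) .B rfl rest

lemma scan_E_dr (r : ℕ) (hr : r ≤ 3) : scan .E (FreeMonoid.toList (d ^ r)) = true := by
  interval_cases r <;> rfl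

lemma scan_A_dr (r : ℕ) (hr : r ≤ 3) : scan .A (FreeMonoid.toList (d ^ r)) = true := by
  interval_cases r <;> rfl

lemma scan_E_tail (q r : ℕ) (hr : r ≤ 3) :
    scan .E (FreeMonoid.toList ((d ^ 3 * c) ^ q * d ^ r)) = true := by
  induction q with
  | zero => rw [pow_zero, one_mul]; exact scan_E_dr r hr
  | succ q ih =>
    rw [pow_succ', mul_assoc, FreeMonoid.toList_mul]
    show scan .E (CD.d :: CD.d :: CD.d :: CD.c :: _) = true
    show scan .E (FreeMonoid.toList ((d ^ 3 * c) ^ q * d ^ r)) = true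
    exact ih

lemma scan_A_tail (q r : ℕ) (hr : r ≤ 3) :
    scan .A (FreeMonoid.toList ((d ^ 3 * c) ^ q * d ^ r)) = true := by
  cases q with
  | zero => rw [pow_zero, one_mul]; exact scan_A_dr r hr
  | succ q =>
    rw [pow_succ', mul_assoc, FreeMonoid.toList_mul]
    show scan .A (CD.d :: CD.d :: CD.d :: CD.c :: _) = true
    show scan .E (FreeMonoid.toList ((d ^ 3 * c) ^ q * d ^ r)) = true
    exact scan_E_tail q r hr

/-! ### UN facts -/

lemma cpow_mem_UN (j : ℕ) (hj : 1 ≤ j) : c ^ j ∈ UN := by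
  refine ⟨[j], by simp, by simpa using hj, ?_⟩
  simp

lemma UN_cons (j : ℕ) (hj : 1 ≤ j) {v : WN} (hv : v ∈ UN) : c ^ j * (d * v) ∈ UN := by
  obtain ⟨l, hl, hall, rfl⟩ := hv
  refine ⟨j :: l, by simp, ?_, ?_⟩
  · intro i hi
    rcases List.mem_cons.1 hi with rfl | hi
    exacts [hj, hall i hi]
  · cases l with
    | nil => exact absurd rfl hl
    | cons i' l' =>
      simp only [List.map_cons]
      rw [List.intersperse_cons_cons, List.prod_cons, List.prod_cons]

/-- Possible futures from state `A`. -/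
def Vf : Set WN :=
  {x | (∃ j : ℕ, x = c ^ j) ∨ ∃ (j : ℕ) (v : WN), v ∈ UN ∧ x = c ^ j * (d * v)}

lemma c_mul_Vf_mem_UN {x : WN} (hx : x ∈ Vf) : c * x ∈ UN := by
  rcases hx with ⟨j, rfl⟩ | ⟨j, v, hv, rfl⟩
  · rw [← pow_succ']
    exact cpow_mem_UN (j + 1) (by omega)
  · rw [← mul_assoc, ← pow_succ']
    exact UN_cons (j + 1) (by omega) hv

lemma c_mul_Vf_mem_Vf {x : WN} (hx : x ∈ Vf) : c * x ∈ Vf := by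
  rcases hx with ⟨j, rfl⟩ | ⟨j, v, hv, rfl⟩
  · exact Or.inl ⟨j + 1, by rw [pow_succ']⟩
  · exact Or.inr ⟨j + 1, v, hv, by rw [pow_succ', mul_assoc]⟩

/-! ### The forward induction -/

def Tl (q r : ℕ) : WN := (d ^ 3 * c) ^ q * d ^ r

def SA (t : List CD) : Prop :=
  scan .A t = true → ∃ x ∈ Vf, ∃ q r, r ≤ 3 ∧ t = FreeMonoid.toList (x * Tl q r)

def SB (t : List CD) : Prop :=
  scan .B t = true →
    (∃ v ∈ UN, ∃ q r, r ≤ 3 ∧ t = FreeMonoid.toList (v * Tl q r)) ∨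
      (∃ q r, r ≤ 3 ∧ CD.d :: t = FreeMonoid.toList (Tl q r))

def SC (t : List CD) : Prop :=
  scan .C t = true → ∃ q r, r ≤ 3 ∧ CD.d :: CD.d :: t = FreeMonoid.toList (Tl q r)

def SD (t : List CD) : Prop :=
  scan .D t = true → ∃ q r, r ≤ 3 ∧ CD.d :: CD.d :: CD.d :: t = FreeMonoid.toList (Tl q r)

def SE (t : List CD) : Prop :=
  scan .E t = true → ∃ q r, r ≤ 3 ∧ t = FreeMonoid.toList (Tl q r)

def SF (t : List CD) : Prop :=
  scan .F t = true → ∃ q r, r ≤ 3 ∧ CD.d :: t = FreeMonoid.toList (Tl q r)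

lemma tl_succ (q r : ℕ) :
    FreeMonoid.toList (Tl (q + 1) r) =
      CD.d :: CD.d :: CD.d :: CD.c :: FreeMonoid.toList (Tl q r) := by
  show FreeMonoid.toList ((d ^ 3 * c) ^ (q + 1) * d ^ r) = _
  rw [pow_succ', mul_assoc, FreeMonoid.toList_mul]
  rfl

lemma main_ind : ∀ t : List CD, SA t ∧ SB t ∧ SC t ∧ SD t ∧ SE t ∧ SF t := by
  intro t
  induction t with
  | nil =>
    refine ⟨fun _ => ⟨1, Or.inl ⟨0, by rw [pow_zero]⟩, 0, 0, by omega, by rfl⟩,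
      fun _ => Or.inr ⟨0, 1, by omega, by rfl⟩,
      fun _ => ⟨0, 2, by omega, by rfl⟩,
      fun _ => ⟨0, 3, by omega, by rfl⟩,
      fun _ => ⟨0, 0, by omega, by rfl⟩,
      fun _ => ⟨0, 1, by omega, by rfl⟩⟩
  | cons x t ih =>
    obtain ⟨iA, iB, iC, iD, iE, iF⟩ := ih
    cases x
    · -- x = c
      refine ⟨?_, ?_, ?_, ?_, ?_, ?_⟩
      · intro h
        obtain ⟨x, hx, q, r, hr, ht⟩ := iA h
        refine ⟨c * x, c_mul_Vf_mem_Vf hx, q, r, hr, ?_⟩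
        rw [mul_assoc, FreeMonoid.toList_mul, ← ht]; rfl
      · intro h
        obtain ⟨x, hx, q, r, hr, ht⟩ := iA h
        refine Or.inl ⟨c * x, c_mul_Vf_mem_UN hx, q, r, hr, ?_⟩
        rw [mul_assoc, FreeMonoid.toList_mul, ← ht]; rfl
      · intro h; exact absurd h (by simp [scan, δ])
      · intro h
        obtain ⟨q, r, hr, ht⟩ := iE h
        exact ⟨q + 1, r, hr, by rw [tl_succ, ← ht]⟩
      · intro h; exact absurd h (by simp [scan, δ])
      · intro h; exact absurd h (by simp [scan, δ])
    · -- x = d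
      refine ⟨?_, ?_, ?_, ?_, ?_, ?_⟩
      · intro h
        rcases iB h with ⟨v, hv, q, r, hr, ht⟩ | ⟨q, r, hr, ht⟩
        · refine ⟨c ^ 0 * (d * v), Or.inr ⟨0, v, hv, rfl⟩, q, r, hr, ?_⟩
          rw [pow_zero, one_mul, mul_assoc, FreeMonoid.toList_mul, ← ht]; rfl
        · exact ⟨1, Or.inl ⟨0, by rw [pow_zero]⟩, q, r, hr, by rw [one_mul, ← ht]⟩
      · intro h
        obtain ⟨q, r, hr, ht⟩ := iC h
        exact Or.inr ⟨q, r, hr, ht⟩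
      · intro h
        obtain ⟨q, r, hr, ht⟩ := iD h
        exact ⟨q, r, hr, ht⟩
      · intro h; exact absurd h (by simp [scan, δ])
      · intro h
        obtain ⟨q, r, hr, ht⟩ := iF h
        exact ⟨q, r, hr, ht⟩
      · intro h
        obtain ⟨q, r, hr, ht⟩ := iC h
        exact ⟨q, r, hr, ht⟩

lemma main_S0 : ∀ t : List CD, scan .S0 t = true → CD.c ∈ t →
    ∃ p : ℕ, ∃ v ∈ UN, ∃ q r, r ≤ 3 ∧ t = FreeMonoid.toList (d ^ p * (v * Tl q r)) := by
  intro t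
  induction t with
  | nil => intro _ h; simp at h
  | cons x t ih =>
    intro h hc
    cases x
    · -- c
      have h' : scan .A t = true := h
      obtain ⟨x, hx, q, r, hr, ht⟩ := (main_ind t).1 h'
      refine ⟨0, c * x, c_mul_Vf_mem_UN hx, q, r, hr, ?_⟩
      rw [pow_zero, one_mul, mul_assoc, FreeMonoid.toList_mul, ← ht]; rfl
    · -- d
      have h' : scan .S0 t = true := h
      have hc' : CD.c ∈ t := by
        rcases List.mem_cons.1 hc with h'' | h''
        · exact absurd h'' (by simp)
        · exact h''
      obtain ⟨p, v, hv, q, r, hr, ht⟩ := ih h' hc'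
      refine ⟨p + 1, v, hv, q, r, hr, ?_⟩
      rw [pow_succ', mul_assoc, FreeMonoid.toList_mul, ← ht]; rfl

end Stmt7Aux

open Stmt7Aux

/-- A word over `{c,d}` containing at least one `c` is irreducible for `R_N` iff it has the
form `d^p v` or `d^p v (d³c)^q d^r` with `v ∈ U_N`, `0 ≤ r ≤ 3`, `q + r > 0`. -/
theorem stmt7 (w : WN) (hc : CD.c ∈ FreeMonoid.toList w) :
    Irred rN w ↔
      ((∃ p : ℕ, ∃ v ∈ UN, w = d ^ p * v) ∨
        (∃ p q r : ℕ, ∃ v ∈ UN, r ≤ 3 ∧ 0 < q + r ∧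
          w = d ^ p * v * (d ^ 3 * c) ^ q * d ^ r)) := by
  rw [irred_iff_not_bad]
  constructor
  · intro h
    have hs : scan .S0 (FreeMonoid.toList w) = true := by
      rw [scan_iff_not_bad]
      simpa [rep] using h
    obtain ⟨p, v, hv, q, r, hr, ht⟩ := main_S0 _ hs hc
    have hw : w = d ^ p * (v * Tl q r) := FreeMonoid.toList.injective ht
    rcases Nat.eq_zero_or_pos (q + r) with hqr | hqr
    · obtain ⟨hq, hr0⟩ : q = 0 ∧ r = 0 := by omega
      subst hq; subst hr0
      refine Or.inl ⟨p, v, hv, ?_⟩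
      rw [hw]
      simp [Tl]
    · refine Or.inr ⟨p, q, r, v, hv, hr, hqr, ?_⟩
      rw [hw, Tl, ← mul_assoc, ← mul_assoc]
  · intro h
    have hw : ∃ p q r : ℕ, ∃ v ∈ UN, r ≤ 3 ∧ w = d ^ p * v * (d ^ 3 * c) ^ q * d ^ r := by
      rcases h with ⟨p, v, hv, hw⟩ | ⟨p, q, r, v, hv, hr, _, hw⟩
      · exact ⟨p, 0, 0, v, hv, by omega, by rw [hw]; simp⟩
      · exact ⟨p, q, r, v, hv, hr, hw⟩
    obtain ⟨p, q, r, v, hv, hr, hw⟩ := hw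
    obtain ⟨l, hl, hall, hvl⟩ := hv
    have hs : scan .S0 (FreeMonoid.toList w) = true := by
      rw [hw, mul_assoc, mul_assoc, FreeMonoid.toList_mul, FreeMonoid.toList_mul,
        scan_S0_dpow, hvl]
      rw [scan_v l hl hall .S0 rfl]
      exact scan_A_tail q r hr
    have := (scan_iff_not_bad (FreeMonoid.toList w) .S0).1 hs
    simpa [rep] using this
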